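/- Let 0 < γ < γ' ≤ 1. Define T = ⌊2(log γ' − log γ)/(log(1−γ) − log(1−γ'))⌋. Then T ≤ 2(1−γ)/γ. -/

import Mathlib

/-- The crossing index T = ⌊2(log γ' − log γ)/(log(1−γ) − log(1−γ'))⌋
satisfies T ≤ 2(1−γ)/γ. -/
theorem stmt_13 (γ γ' : ℝ) (hγ : 0 < γ) (hγγ' : γ < γ') (hγ' : γ' < 1) :
    (⌊2 * (Real.log γ' - Real.log γ) /
        (Real.log (1 - γ) - Real.log (1 - γ'))⌋ : ℝ)
      ≤ 2 * (1 - γ) / γ := by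
  have hγ'pos : 0 < γ' := hγ.trans hγγ'
  have h1 : 0 < 1 - γ' := by linarith
  have h2 : 0 < 1 - γ := by linarith
  -- numerator bound: log γ' - log γ ≤ (γ' - γ)/γ
  have hnum : Real.log γ' - Real.log γ ≤ (γ' - γ) / γ := by
    rw [← Real.log_div (ne_of_gt hγ'pos) (ne_of_gt hγ)]
    have h := Real.log_le_sub_one_of_pos (div_pos hγ'pos hγ)
    have : γ' / γ - 1 = (γ' - γ) / γ := by field_simp
    linarith
  -- denominator bound: (γ' - γ)/(1-γ) ≤ log(1-γ) - log(1-γ')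
  have hden : (γ' - γ) / (1 - γ) ≤ Real.log (1 - γ) - Real.log (1 - γ') := by
    have h := Real.log_le_sub_one_of_pos (div_pos h1 h2)
    rw [Real.log_div (ne_of_gt h1) (ne_of_gt h2)] at h
    have : (1 - γ') / (1 - γ) - 1 = -((γ' - γ) / (1 - γ)) := by field_simp; ring
    linarith
  have hdpos : 0 < Real.log (1 - γ) - Real.log (1 - γ') := by
    have : 0 < (γ' - γ) / (1 - γ) := div_pos (by linarith) h2
    linarith
  have hfloor : (⌊2 * (Real.log γ' - Real.log γ) /
        (Real.log (1 - γ) - Real.log (1 - γ'))⌋ : ℝ)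
      ≤ 2 * (Real.log γ' - Real.log γ) /
        (Real.log (1 - γ) - Real.log (1 - γ')) := Int.floor_le _
  refine hfloor.trans ?_
  rw [div_le_div_iff₀ hdpos hγ]
  have hnum' : (Real.log γ' - Real.log γ) * γ ≤ γ' - γ := by
    rw [← le_div_iff₀ hγ] at *; exact hnum
  have hden' : γ' - γ ≤ (Real.log (1 - γ) - Real.log (1 - γ')) * (1 - γ) := by
    rw [← div_le_iff₀ h2]; exact hden
  nlinarith [hnum', hden']
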